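/- arXiv:2008.04123 — 2 statements merged into one kernel-verified Lean document; each statement's English description precedes it below -/
import Mathlib

section
/- Let G be a finite non-abelian group, H a subgroup of G, and g ∈ G with g ≠ 1 and g² ≠ 1. Let x ∈ G \ H be a vertex of the relative g-noncommuting graph Γ^g_{H,G}. If exactly one of the conditions '∃ y ∈ H with y⁻¹xy = xg' and '∃ y ∈ H with y⁻¹xy = xg⁻¹' holds, then the degree of x equals |H| − |C_H(x)|; if both conditions hold, then the degree of x equals |H| − 2|C_H(x)|. -/
/-- The relative `g`-noncommuting graph of a group `G` with respect to a subgroup `H`: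
vertices are the elements of `G`, and distinct `x`, `y` are adjacent iff
(`x ∈ H` or `y ∈ H`) and the commutator `x⁻¹ * y⁻¹ * x * y` is neither `g` nor `g⁻¹`. -/
def relGraph {G : Type*} [Group G] (H : Subgroup G) (g : G) : SimpleGraph G where
  Adj x y := x ≠ y ∧ (x ∈ H ∨ y ∈ H) ∧ x⁻¹ * y⁻¹ * x * y ≠ g ∧ x⁻¹ * y⁻¹ * x * y ≠ g⁻¹
  symm := ⟨by
    rintro x y ⟨hxy, hmem, h1, h2⟩
    have key : (x⁻¹ * y⁻¹ * x * y)⁻¹ = y⁻¹ * x⁻¹ * y * x := by group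
    refine ⟨hxy.symm, hmem.symm, fun h => h2 ?_, fun h => h1 ?_⟩
    · rw [← inv_inv (x⁻¹ * y⁻¹ * x * y), key, h]
    · rw [← inv_inv (x⁻¹ * y⁻¹ * x * y), key, h, inv_inv]⟩
  loopless := ⟨fun x h => h.1 rfl⟩

theorem stmt5 {G : Type*} [Group G] [Fintype G]
    (hG : ¬ ∀ a b : G, a * b = b * a)
    (H : Subgroup G) (g : G) (hg1 : g ≠ 1) (hg2 : g ^ 2 ≠ 1)
    (x : G) (hx : x ∉ H) :
    (((∃ y ∈ H, y⁻¹ * x * y = x * g) ∧ ¬ (∃ y ∈ H, y⁻¹ * x * y = x * g⁻¹)) ∨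
     ((¬ ∃ y ∈ H, y⁻¹ * x * y = x * g) ∧ (∃ y ∈ H, y⁻¹ * x * y = x * g⁻¹)) →
       (((relGraph H g).neighborSet x).ncard : ℤ)
         = (Nat.card H : ℤ) - ({y : G | y ∈ H ∧ x * y = y * x}.ncard : ℤ)) ∧
    ((∃ y ∈ H, y⁻¹ * x * y = x * g) ∧ (∃ y ∈ H, y⁻¹ * x * y = x * g⁻¹) →
       (((relGraph H g).neighborSet x).ncard : ℤ)
         = (Nat.card H : ℤ) - 2 * ({y : G | y ∈ H ∧ x * y = y * x}.ncard : ℤ)) := by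
  classical
  set A : Set G := {y | y ∈ H ∧ y⁻¹ * x * y = x * g} with hAdef
  set B : Set G := {y | y ∈ H ∧ y⁻¹ * x * y = x * g⁻¹} with hBdef
  set C : Set G := {y : G | y ∈ H ∧ x * y = y * x} with hCdef
  have key : ∀ (g' y : G), x⁻¹ * y⁻¹ * x * y = g' ↔ y⁻¹ * x * y = x * g' := by
    intro g' y
    constructor
    · intro h; rw [← h]; group
    · intro h
      calc x⁻¹ * y⁻¹ * x * y = x⁻¹ * (y⁻¹ * x * y) := by group
        _ = x⁻¹ * (x * g') := by rw [h]
        _ = g' := by group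
  have hneigh : (relGraph H g).neighborSet x = (H : Set G) \ (A ∪ B) := by
    ext y
    simp only [SimpleGraph.mem_neighborSet, relGraph, Set.mem_diff, Set.mem_union,
      hAdef, hBdef, Set.mem_setOf_eq, SetLike.mem_coe]
    constructor
    · rintro ⟨hxy, hmem, h1, h2⟩
      have hyH : y ∈ H := hmem.resolve_left hx
      refine ⟨hyH, ?_⟩
      rintro (⟨_, hy⟩ | ⟨_, hy⟩)
      · exact h1 ((key g y).2 hy)
      · exact h2 ((key g⁻¹ y).2 hy)
    · rintro ⟨hyH, hy⟩
      refine ⟨fun h => hx (h ▸ hyH), Or.inr hyH, ?_, ?_⟩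
      · intro h; exact hy (Or.inl ⟨hyH, (key g y).1 h⟩)
      · intro h; exact hy (Or.inr ⟨hyH, (key g⁻¹ y).1 h⟩)
  have hcard : ∀ g' z : G, z ∈ H → z⁻¹ * x * z = x * g' →
      {y : G | y ∈ H ∧ y⁻¹ * x * y = x * g'}.ncard = C.ncard := by
    intro g' z hzH hz
    have himg : {y : G | y ∈ H ∧ y⁻¹ * x * y = x * g'} = (fun u => u * z) '' C := by
      ext y
      simp only [Set.mem_image, Set.mem_setOf_eq, hCdef]
      constructor
      · rintro ⟨hyH, hy⟩
        refine ⟨y * z⁻¹, ⟨H.mul_mem hyH (H.inv_mem hzH), ?_⟩, by group⟩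
        have h2 : y⁻¹ * x * y = z⁻¹ * x * z := by rw [hy, hz]
        calc x * (y * z⁻¹) = y * (y⁻¹ * x * y) * z⁻¹ := by group
          _ = y * (z⁻¹ * x * z) * z⁻¹ := by rw [h2]
          _ = y * z⁻¹ * x := by group
      · rintro ⟨u, ⟨huH, hu⟩, rfl⟩
        refine ⟨H.mul_mem huH hzH, ?_⟩
        calc (u * z)⁻¹ * x * (u * z) = z⁻¹ * (u⁻¹ * (x * u)) * z := by group
          _ = z⁻¹ * (u⁻¹ * (u * x)) * z := by rw [hu]
          _ = z⁻¹ * x * z := by group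
          _ = x * g' := hz
    rw [himg, Set.ncard_image_of_injective _ (mul_left_injective z)]
  have hAB : Disjoint A B := by
    rw [Set.disjoint_left]
    rintro y ⟨_, h1⟩ ⟨_, h2⟩
    apply hg2
    have hgg : g = g⁻¹ := mul_left_cancel (show x * g = x * g⁻¹ by rw [← h1, h2])
    calc g ^ 2 = g * g := sq g
      _ = g * g⁻¹ := by nth_rewrite 2 [hgg]; rfl
      _ = 1 := mul_inv_cancel g
  have hsub : A ∪ B ⊆ (H : Set G) := by
    rintro y (⟨h, _⟩ | ⟨h, _⟩) <;> exact h
  have hHcard : Nat.card ↥H = (H : Set G).ncard := by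
    rw [← Nat.card_coe_set_eq]; rfl
  have hcount : ((relGraph H g).neighborSet x).ncard
      = (H : Set G).ncard - (A.ncard + B.ncard) := by
    rw [hneigh, Set.ncard_diff hsub (Set.toFinite _), Set.ncard_union_eq hAB]
  have hle : A.ncard + B.ncard ≤ (H : Set G).ncard := by
    rw [← Set.ncard_union_eq hAB]
    exact Set.ncard_le_ncard hsub (Set.toFinite _)
  constructor
  · rintro (⟨⟨z, hzH, hz⟩, hnB⟩ | ⟨hnA, ⟨z, hzH, hz⟩⟩)
    · have hAc : A.ncard = C.ncard := hcard g z hzH hz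
      have hBe : B = ∅ := by
        ext y
        simp only [Set.mem_empty_iff_false, iff_false, hBdef, Set.mem_setOf_eq]
        rintro ⟨h1, h2⟩; exact hnB ⟨y, h1, h2⟩
      rw [hAc, hBe, Set.ncard_empty] at hcount hle
      rw [hcount, hHcard]
      omega
    · have hBc : B.ncard = C.ncard := hcard g⁻¹ z hzH hz
      have hAe : A = ∅ := by
        ext y
        simp only [Set.mem_empty_iff_false, iff_false, hAdef, Set.mem_setOf_eq]
        rintro ⟨h1, h2⟩; exact hnA ⟨y, h1, h2⟩
      rw [hBc, hAe, Set.ncard_empty] at hcount hle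
      rw [hcount, hHcard]
      omega
  · rintro ⟨⟨z, hzH, hz⟩, ⟨w, hwH, hw⟩⟩
    have hAc : A.ncard = C.ncard := hcard g z hzH hz
    have hBc : B.ncard = C.ncard := hcard g⁻¹ w hwH hw
    rw [hAc, hBc] at hcount hle
    rw [hcount, hHcard]
    omega
end

section
/- Let G be a finite non-abelian group, H a non-trivial subgroup of G with H ≠ Z(H,G), and g = 1. Then twice the number of edges of the relative g-noncommuting graph Γ^g_{H,G} equals 2(|H||G| − N₁(H,G)) − (|H|² − N₁(H)), where N₁(H,G) = |{(x,y) ∈ H × G : [x,y] = 1}| and N₁(H) = |{(x,y) ∈ H × H : [x,y] = 1}|. -/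
set_option maxHeartbeats 1000000 in
open Finset in
theorem stmt16 {G : Type*} [Group G] [Fintype G]
    (hG : ¬ ∀ a b : G, a * b = b * a)
    (H : Subgroup G) (hH : H ≠ ⊥)
    (hHZ : (H : Set G) ≠ {x : G | x ∈ H ∧ ∀ y : G, x * y = y * x}) :
    2 * (((relGraph H (1 : G)).edgeSet.ncard : ℤ))
      = 2 * ((Nat.card H : ℤ) * (Nat.card G : ℤ)
            - ({p : G × G | p.1 ∈ H ∧ p.1⁻¹ * p.2⁻¹ * p.1 * p.2 = 1}.ncard : ℤ))
        - ((Nat.card H : ℤ) ^ 2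
            - ({p : G × G | p.1 ∈ H ∧ p.2 ∈ H ∧ p.1⁻¹ * p.2⁻¹ * p.1 * p.2 = 1}.ncard : ℤ)) := by
  classical
  set c : G × G → G := fun p => p.1⁻¹ * p.2⁻¹ * p.1 * p.2 with hc
  have hcomm : ∀ x y : G, x⁻¹ * y⁻¹ * x * y = 1 ↔ y * x = x * y := by
    intro x y
    rw [show x⁻¹ * y⁻¹ * x * y = (y * x)⁻¹ * (x * y) by group, inv_mul_eq_one]
  set S : Finset (G × G) := univ.filter (fun p => p.1 ∈ H ∧ c p ≠ 1) with hS
  set T : Finset (G × G) := univ.filter (fun p => p.2 ∈ H ∧ c p ≠ 1) with hT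
  set K1 : Finset (G × G) := univ.filter (fun p => p.1 ∈ H ∧ c p = 1) with hK1
  set K2 : Finset (G × G) := univ.filter (fun p => p.2 ∈ H ∧ c p = 1) with hK2
  set K3 : Finset (G × G) := univ.filter (fun p => p.1 ∈ H ∧ p.2 ∈ H ∧ c p = 1) with hK3
  set ST : Finset (G × G) := univ.filter (fun p => p.1 ∈ H ∧ p.2 ∈ H ∧ c p ≠ 1) with hST
  set h : ℕ := (univ.filter (fun x : G => x ∈ H)).card with hh
  have hHcard : (Nat.card H : ℤ) = (h : ℤ) := by
    rw [Nat.card_eq_fintype_card, Fintype.card_subtype]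
  have hGcard : (Nat.card G : ℤ) = (Fintype.card G : ℤ) := by
    rw [Nat.card_eq_fintype_card]
  have hcsw : ∀ p : G × G, c p.swap = 1 ↔ c p = 1 := by
    intro p
    rw [hc]
    simp only [Prod.fst_swap, Prod.snd_swap]
    rw [hcomm, hcomm]
    exact eq_comm
  have hK21 : K2.card = K1.card := by
    refine Finset.card_bij' (fun p _ => p.swap) (fun p _ => p.swap) ?_ ?_ ?_ ?_
    · intro p hp
      simp only [hK2, mem_filter, mem_univ, true_and] at hp
      simp only [hK1, mem_filter, mem_univ, true_and, Prod.fst_swap]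
      exact ⟨hp.1, (hcsw p).2 hp.2⟩
    · intro p hp
      simp only [hK1, mem_filter, mem_univ, true_and] at hp
      simp only [hK2, mem_filter, mem_univ, true_and, Prod.snd_swap]
      exact ⟨hp.1, (hcsw p).2 hp.2⟩
    · intro p _; exact Prod.swap_swap p
    · intro p _; exact Prod.swap_swap p
  -- base counts
  have hbase1 : (univ.filter (fun p : G × G => p.1 ∈ H)).card = h * Fintype.card G := by
    rw [show (univ.filter (fun p : G × G => p.1 ∈ H))
        = (univ.filter (fun x : G => x ∈ H)) ×ˢ (univ : Finset G) by
      ext p; simp]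
    rw [Finset.card_product, card_univ]
  have hbase2 : (univ.filter (fun p : G × G => p.2 ∈ H)).card = h * Fintype.card G := by
    rw [show (univ.filter (fun p : G × G => p.2 ∈ H))
        = (univ : Finset G) ×ˢ (univ.filter (fun x : G => x ∈ H)) by
      ext p; simp]
    rw [Finset.card_product, card_univ, Nat.mul_comm]
  have hbase3 : (univ.filter (fun p : G × G => p.1 ∈ H ∧ p.2 ∈ H)).card = h * h := by
    rw [show (univ.filter (fun p : G × G => p.1 ∈ H ∧ p.2 ∈ H))
        = (univ.filter (fun x : G => x ∈ H)) ×ˢ (univ.filter (fun x : G => x ∈ H)) by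
      ext p; simp]
    rw [Finset.card_product]
  -- splits
  have hsplit1 : K1.card + S.card = h * Fintype.card G := by
    rw [← hbase1]
    have := Finset.card_filter_add_card_filter_not
      (s := univ.filter (fun p : G × G => p.1 ∈ H)) (p := fun p => c p = 1)
    rw [Finset.filter_filter, Finset.filter_filter] at this
    rw [hK1, hS]
    convert this using 3 <;> ext p <;> tauto
  have hsplit2 : K2.card + T.card = h * Fintype.card G := by
    rw [← hbase2]
    have := Finset.card_filter_add_card_filter_not
      (s := univ.filter (fun p : G × G => p.2 ∈ H)) (p := fun p => c p = 1)
    rw [Finset.filter_filter, Finset.filter_filter] at this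
    rw [hK2, hT]
    convert this using 3 <;> ext p <;> tauto
  have hsplit3 : K3.card + ST.card = h * h := by
    rw [← hbase3]
    have := Finset.card_filter_add_card_filter_not
      (s := univ.filter (fun p : G × G => p.1 ∈ H ∧ p.2 ∈ H)) (p := fun p => c p = 1)
    rw [Finset.filter_filter, Finset.filter_filter] at this
    rw [hK3, hST]
    convert this using 3 <;> ext p <;>
      simp only [mem_filter, mem_univ, true_and] <;> tauto
  -- intersection
  have hinter : S ∩ T = ST := by
    ext p; simp only [hS, hT, hST, Finset.mem_inter, mem_filter, mem_univ, true_and]; tauto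
  -- union card identity
  have hunion : ((S ∪ T).card : ℤ) = (S.card : ℤ) + T.card - ST.card := by
    have := Finset.card_union_add_card_inter S T
    rw [hinter] at this
    have := congrArg (fun n : ℕ => (n : ℤ)) this
    push_cast at this
    linarith
  -- edge count
  have hedge : 2 * ((relGraph H (1 : G)).edgeFinset.card) = (S ∪ T).card := by
    rw [SimpleGraph.two_mul_card_edgeFinset]
    congr 1
    ext ⟨x, y⟩
    simp only [hS, hT, Finset.mem_union, mem_filter, mem_univ, true_and, hc]; simp only [relGraph]
    constructor
    · rintro ⟨hxy, hmem, h1, _⟩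
      rcases hmem with hm | hm
      · exact Or.inl ⟨hm, h1⟩
      · exact Or.inr ⟨hm, h1⟩
    · rintro (⟨hm, h1⟩ | ⟨hm, h1⟩) <;>
      · refine ⟨?_, by tauto, h1, by simpa using h1⟩
        rintro rfl
        exact h1 (by group)
  have hedgeset : ((relGraph H (1 : G)).edgeSet.ncard : ℤ)
      = ((relGraph H (1 : G)).edgeFinset.card : ℤ) := by
    rw [Set.ncard_eq_toFinset_card', SimpleGraph.edgeFinset]
  -- set ncards
  have hn1 : ({p : G × G | p.1 ∈ H ∧ p.1⁻¹ * p.2⁻¹ * p.1 * p.2 = 1}.ncard : ℤ)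
      = (K1.card : ℤ) := by
    congr 1
    rw [show {p : G × G | p.1 ∈ H ∧ p.1⁻¹ * p.2⁻¹ * p.1 * p.2 = 1} = (K1 : Set (G × G)) by
      ext p; simp [hK1, hc]]
    exact Set.ncard_coe_finset _
  have hn3 : ({p : G × G | p.1 ∈ H ∧ p.2 ∈ H ∧ p.1⁻¹ * p.2⁻¹ * p.1 * p.2 = 1}.ncard : ℤ)
      = (K3.card : ℤ) := by
    congr 1
    rw [show {p : G × G | p.1 ∈ H ∧ p.2 ∈ H ∧ p.1⁻¹ * p.2⁻¹ * p.1 * p.2 = 1}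
        = (K3 : Set (G × G)) by ext p; simp [hK3, hc]]
    exact Set.ncard_coe_finset _
  -- conclude
  have hedgeZ : 2 * ((relGraph H (1 : G)).edgeSet.ncard : ℤ) = ((S ∪ T).card : ℤ) := by
    rw [hedgeset]
    exact_mod_cast congrArg (fun n : ℕ => (n : ℤ)) hedge
  rw [hedgeZ, hunion, hn1, hn3, hHcard, hGcard]
  have e1 : (K1.card : ℤ) + S.card = (h : ℤ) * Fintype.card G := by exact_mod_cast hsplit1
  have e2 : (K2.card : ℤ) + T.card = (h : ℤ) * Fintype.card G := by exact_mod_cast hsplit2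
  have e3 : (K3.card : ℤ) + ST.card = (h : ℤ) * h := by exact_mod_cast hsplit3
  have e4 : (K2.card : ℤ) = K1.card := by exact_mod_cast hK21
  ring_nf
  nlinarith [e1, e2, e3, e4]
end
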